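/- Compactness for QLET_F: (1) Γ ⊨ A if and only if there is a finite subset Γ₀ ⊆ Γ with Γ₀ ⊨ A; (2) Γ has a model if and only if every finite subset of Γ has a model. -/

import Mathlib

set_option autoImplicit true
set_option relaxedAutoImplicit true

namespace QLETF

/-- Formulas of a first-order language with a classicality operator `cl` (∘),
a non-classicality operator `ncl` (•), identity `eq`, over a type `K` of
individual constants.  Terms are `ℕ ⊕ K`: `Sum.inl n` is the variable `vₙ`,
`Sum.inr c` is the constant `c`.  Predicate letters are indexed by `ℕ`. -/
inductive Fm (K : Type) : Type where
  | pred : ℕ → List (ℕ ⊕ K) → Fm K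
  | eq   : (ℕ ⊕ K) → (ℕ ⊕ K) → Fm K
  | neg  : Fm K → Fm K
  | conj : Fm K → Fm K → Fm K
  | disj : Fm K → Fm K → Fm K
  | cl   : Fm K → Fm K
  | ncl  : Fm K → Fm K
  | all  : ℕ → Fm K → Fm K
  | ex   : ℕ → Fm K → Fm K

variable {K K' : Type}

/-- Substitution on terms: replace the variable `x` by the term `t`. -/
def substT (x : ℕ) (t : ℕ ⊕ K) : (ℕ ⊕ K) → (ℕ ⊕ K)
  | .inl y => if y = x then t else .inl y
  | .inr c => .inr c

/-- `subst x t A` replaces every free occurrence of the variable `x` in `A` by `t`. -/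
def subst (x : ℕ) (t : ℕ ⊕ K) : Fm K → Fm K
  | .pred n ts => .pred n (ts.map (substT x t))
  | .eq a b    => .eq (substT x t a) (substT x t b)
  | .neg A     => .neg (subst x t A)
  | .conj A B  => .conj (subst x t A) (subst x t B)
  | .disj A B  => .disj (subst x t A) (subst x t B)
  | .cl A      => .cl (subst x t A)
  | .ncl A     => .ncl (subst x t A)
  | .all y A   => if y = x then .all y A else .all y (subst x t A)
  | .ex y A    => if y = x then .ex y A else .ex y (subst x t A)

/-- The set of free variables of a formula. -/
def fv : Fm K → Set ℕ
  | .pred _ ts => {y | Sum.inl y ∈ ts}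
  | .eq a b    => {y | a = Sum.inl y ∨ b = Sum.inl y}
  | .neg A     => fv A
  | .conj A B  => fv A ∪ fv B
  | .disj A B  => fv A ∪ fv B
  | .cl A      => fv A
  | .ncl A     => fv A
  | .all y A   => fv A \ {y}
  | .ex y A    => fv A \ {y}

/-- The set of all (free or bound) variables occurring in a formula. -/
def vars : Fm K → Set ℕ
  | .pred _ ts => {y | Sum.inl y ∈ ts}
  | .eq a b    => {y | a = Sum.inl y ∨ b = Sum.inl y}
  | .neg A     => vars A
  | .conj A B  => vars A ∪ vars B
  | .disj A B  => vars A ∪ vars B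
  | .cl A      => vars A
  | .ncl A     => vars A
  | .all y A   => insert y (vars A)
  | .ex y A    => insert y (vars A)

/-- The constant `c` occurs in the formula. -/
def cOcc (c : K) : Fm K → Prop
  | .pred _ ts => Sum.inr c ∈ ts
  | .eq a b    => a = Sum.inr c ∨ b = Sum.inr c
  | .neg A     => cOcc c A
  | .conj A B  => cOcc c A ∨ cOcc c B
  | .disj A B  => cOcc c A ∨ cOcc c B
  | .cl A      => cOcc c A
  | .ncl A     => cOcc c A
  | .all _ A   => cOcc c A
  | .ex _ A    => cOcc c A

/-- A sentence is a formula with no free variables. -/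
def Closed (A : Fm K) : Prop := fv A = ∅

/-- The formula contains no occurrence of the operators ∘ and •. -/
def clFree : Fm K → Prop
  | .pred _ _ => True
  | .eq _ _   => True
  | .neg A    => clFree A
  | .conj A B => clFree A ∧ clFree B
  | .disj A B => clFree A ∧ clFree B
  | .cl _     => False
  | .ncl _    => False
  | .all _ A  => clFree A
  | .ex _ A   => clFree A

/-- Alphabetic variance: the least equivalence relation, compatible with the
connectives, that allows renaming a bound variable to a fresh one. -/
inductive Alpha : Fm K → Fm K → Prop
  | refl (A : Fm K) : Alpha A A
  | symm : Alpha A B → Alpha B A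
  | trans : Alpha A B → Alpha B C → Alpha A C
  | negC : Alpha A B → Alpha (.neg A) (.neg B)
  | conjC : Alpha A A' → Alpha B B' → Alpha (.conj A B) (.conj A' B')
  | disjC : Alpha A A' → Alpha B B' → Alpha (.disj A B) (.disj A' B')
  | clC : Alpha A B → Alpha (.cl A) (.cl B)
  | nclC : Alpha A B → Alpha (.ncl A) (.ncl B)
  | allC : Alpha A B → Alpha (.all x A) (.all x B)
  | exC : Alpha A B → Alpha (.ex x A) (.ex x B)
  | allR (x y : ℕ) (A : Fm K) : y ∉ vars A →
      Alpha (.all x A) (.all y (subst x (Sum.inl y) A))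
  | exR (x y : ℕ) (A : Fm K) : y ∉ vars A →
      Alpha (.ex x A) (.ex y (subst x (Sum.inl y) A))

/-- The natural deduction system QLET_F (sequent-style: `Deriv Γ A` means that
`A` is derivable from the set of hypotheses `Γ`). -/
inductive Deriv : Set (Fm K) → Fm K → Prop
  | hyp : A ∈ Γ → Deriv Γ A
  | andI : Deriv Γ A → Deriv Γ B → Deriv Γ (.conj A B)
  | andE1 : Deriv Γ (.conj A B) → Deriv Γ A
  | andE2 : Deriv Γ (.conj A B) → Deriv Γ B
  | orI1 : Deriv Γ A → Deriv Γ (.disj A B)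
  | orI2 : Deriv Γ B → Deriv Γ (.disj A B)
  | orE : Deriv Γ (.disj A B) → Deriv (insert A Γ) C → Deriv (insert B Γ) C → Deriv Γ C
  | negAndI1 : Deriv Γ (.neg A) → Deriv Γ (.neg (.conj A B))
  | negAndI2 : Deriv Γ (.neg B) → Deriv Γ (.neg (.conj A B))
  | negAndE : Deriv Γ (.neg (.conj A B)) → Deriv (insert (.neg A) Γ) C →
      Deriv (insert (.neg B) Γ) C → Deriv Γ C
  | negOrI : Deriv Γ (.neg A) → Deriv Γ (.neg B) → Deriv Γ (.neg (.disj A B))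
  | negOrE1 : Deriv Γ (.neg (.disj A B)) → Deriv Γ (.neg A)
  | negOrE2 : Deriv Γ (.neg (.disj A B)) → Deriv Γ (.neg B)
  | dnI : Deriv Γ A → Deriv Γ (.neg (.neg A))
  | dnE : Deriv Γ (.neg (.neg A)) → Deriv Γ A
  | expO : Deriv Γ (.cl A) → Deriv Γ A → Deriv Γ (.neg A) → Deriv Γ B
  | pemO : Deriv Γ (.cl A) → Deriv Γ (.disj A (.neg A))
  | consR : Deriv Γ (.cl A) → Deriv Γ (.ncl A) → Deriv Γ B
  | compR : Deriv Γ (.disj (.cl A) (.ncl A))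
  | allI : Deriv Γ (.disj B (subst x (Sum.inr c) A)) → ¬ cOcc c A → ¬ cOcc c B →
      (∀ G ∈ Γ, ¬ cOcc c G) → Deriv Γ (.disj B (.all x A))
  | allE : Deriv Γ (.all x A) → Deriv Γ (subst x (Sum.inr c) A)
  | exI : Deriv Γ (subst x (Sum.inr c) A) → Deriv Γ (.ex x A)
  | exE : Deriv Γ (.ex x A) → Deriv (insert (subst x (Sum.inr c) A) Γ) C →
      ¬ cOcc c A → ¬ cOcc c C → (∀ G ∈ Γ, ¬ cOcc c G) → Deriv Γ C
  | negAllI : Deriv Γ (.neg (subst x (Sum.inr c) A)) → Deriv Γ (.neg (.all x A))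
  | negAllE : Deriv Γ (.neg (.all x A)) → Deriv (insert (.neg (subst x (Sum.inr c) A)) Γ) C →
      ¬ cOcc c A → ¬ cOcc c C → (∀ G ∈ Γ, ¬ cOcc c G) → Deriv Γ C
  | negExI : Deriv Γ (.neg (subst x (Sum.inr c) A)) → ¬ cOcc c A →
      (∀ G ∈ Γ, ¬ cOcc c G) → Deriv Γ (.neg (.ex x A))
  | negExE : Deriv Γ (.neg (.ex x A)) → Deriv Γ (.neg (subst x (Sum.inr c) A))
  | eqI : Deriv Γ (.eq (Sum.inr c) (Sum.inr c))
  | eqE : Deriv Γ (.eq (Sum.inr c₁) (Sum.inr c₂)) → Deriv Γ (subst x (Sum.inr c₁) A) →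
      Deriv Γ (subst x (Sum.inr c₂) A)
  | av : Deriv Γ A → Alpha A A' → Deriv Γ A'

/-- An S-structure: each constant denotes an element of the domain `D`, each
predicate letter gets an extension `Pplus` and an anti-extension `Pminus`;
the extension of identity is fixed as the diagonal, its anti-extension
`eqMinus` is arbitrary. -/
structure Struc (C D : Type) where
  cI : C → D
  Pplus : ℕ → List D → Prop
  Pminus : ℕ → List D → Prop
  eqMinus : D → D → Prop

variable {C D : Type}

/-- Denotation of a constant of the diagram language (`C ⊕ D`): a diagram
constant `ā` (for `a : D`) denotes `a` itself. -/
def den (S : Struc C D) : C ⊕ D → D := Sum.elim S.cI id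

/-- Clauses (1)-(7) and (10)-(13) of the valuation definition: the clauses
for atomic and negated atomic sentences, ∧, ∨, De Morgan negations,
double negation, and the substitutional quantifier clauses. -/
structure ValCore (S : Struc C D) (v : Fm (C ⊕ D) → Bool) : Prop where
  atom : ∀ (n : ℕ) (cs : List (C ⊕ D)),
    v (.pred n (cs.map Sum.inr)) = true ↔ S.Pplus n (cs.map (den S))
  natom : ∀ (n : ℕ) (cs : List (C ⊕ D)),
    v (.neg (.pred n (cs.map Sum.inr))) = true ↔ S.Pminus n (cs.map (den S))
  eqP : ∀ a b : C ⊕ D, v (.eq (Sum.inr a) (Sum.inr b)) = true ↔ den S a = den S b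
  eqN : ∀ a b : C ⊕ D, v (.neg (.eq (Sum.inr a) (Sum.inr b))) = true ↔
    S.eqMinus (den S a) (den S b)
  andC : ∀ A B, Closed A → Closed B →
    (v (.conj A B) = true ↔ v A = true ∧ v B = true)
  orC : ∀ A B, Closed A → Closed B →
    (v (.disj A B) = true ↔ v A = true ∨ v B = true)
  nandC : ∀ A B, Closed A → Closed B →
    (v (.neg (.conj A B)) = true ↔ v (.neg A) = true ∨ v (.neg B) = true)
  norC : ∀ A B, Closed A → Closed B →
    (v (.neg (.disj A B)) = true ↔ v (.neg A) = true ∧ v (.neg B) = true)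
  dnC : ∀ A, Closed A → v (.neg (.neg A)) = v A
  allC : ∀ (x : ℕ) (A : Fm (C ⊕ D)), fv A ⊆ {x} →
    (v (.all x A) = true ↔ ∀ d : D, v (subst x (Sum.inr (Sum.inr d)) A) = true)
  exC : ∀ (x : ℕ) (A : Fm (C ⊕ D)), fv A ⊆ {x} →
    (v (.ex x A) = true ↔ ∃ d : D, v (subst x (Sum.inr (Sum.inr d)) A) = true)
  nallC : ∀ (x : ℕ) (A : Fm (C ⊕ D)), fv A ⊆ {x} →
    (v (.neg (.all x A)) = true ↔ ∃ d : D, v (.neg (subst x (Sum.inr (Sum.inr d)) A)) = true)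
  nexC : ∀ (x : ℕ) (A : Fm (C ⊕ D)), fv A ⊆ {x} →
    (v (.neg (.ex x A)) = true ↔ ∀ d : D, v (.neg (subst x (Sum.inr (Sum.inr d)) A)) = true)

/-- An 𝔄-valuation for QLET_F: the determined clauses together with clauses
(8), (9), (14) (alphabetic variants) and (15). -/
structure IsVal (S : Struc C D) (v : Fm (C ⊕ D) → Bool) extends ValCore S v : Prop where
  clC : ∀ A, Closed A → v (.cl A) = true → (v A = true ↔ v (.neg A) = false)
  compC : ∀ A, Closed A → (v (.cl A) = true ↔ v (.ncl A) = false)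
  avC : ∀ A A', Closed A → Alpha A A' → v A = v A'
  substC : ∀ (x : ℕ) (A : Fm (C ⊕ D)), fv A ⊆ {x} → ∀ c₁ c₂ : C ⊕ D,
    den S c₁ = den S c₂ →
    v (subst x (Sum.inr c₁) A) = v (subst x (Sum.inr c₂) A) →
    (v (.neg (subst x (Sum.inr c₁) A)) = v (.neg (subst x (Sum.inr c₂) A)) ∧
     v (.cl (subst x (Sum.inr c₁) A)) = v (.cl (subst x (Sum.inr c₂) A)) ∧
     v (.ncl (subst x (Sum.inr c₁) A)) = v (.ncl (subst x (Sum.inr c₂) A)))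

/-- Map a formula along a renaming of its constants (used to embed the base
language into the diagram language). -/
def Fm.map (f : K → K') : Fm K → Fm K'
  | .pred n ts => .pred n (ts.map (Sum.map id f))
  | .eq a b    => .eq (Sum.map id f a) (Sum.map id f b)
  | .neg A     => .neg (Fm.map f A)
  | .conj A B  => .conj (Fm.map f A) (Fm.map f B)
  | .disj A B  => .disj (Fm.map f A) (Fm.map f B)
  | .cl A      => .cl (Fm.map f A)
  | .ncl A     => .ncl (Fm.map f A)
  | .all y A   => .all y (Fm.map f A)
  | .ex y A    => .ex y (Fm.map f A)

/-- A sentence of the base language holds in the interpretation ⟨S, v⟩. -/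
def Sat (S : Struc C D) (v : Fm (C ⊕ D) → Bool) (A : Fm C) : Prop :=
  v (A.map Sum.inl) = true

/-- Semantic consequence: every interpretation making all of Γ hold makes A hold. -/
def SemCons (Γ : Set (Fm C)) (A : Fm C) : Prop :=
  ∀ (D : Type) (S : Struc C D) (v : Fm (C ⊕ D) → Bool), Nonempty D → IsVal S v →
    (∀ B ∈ Γ, Sat S v B) → Sat S v A

/-- Γ has a model. -/
def HasModel (Γ : Set (Fm C)) : Prop :=
  ∃ (D : Type) (S : Struc C D) (v : Fm (C ⊕ D) → Bool),
    Nonempty D ∧ IsVal S v ∧ ∀ B ∈ Γ, Sat S v B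

/-- Henkin set: Δ proves an existential iff it proves some instance, and a
universal iff it proves every instance. -/
def Henkin (Δ : Set (Fm K)) : Prop :=
  ∀ (x : ℕ) (B : Fm K),
    (Deriv Δ (.ex x B) ↔ ∃ c : K, Deriv Δ (subst x (Sum.inr c) B)) ∧
    (Deriv Δ (.all x B) ↔ ∀ c : K, Deriv Δ (subst x (Sum.inr c) B))

/-- Regular set: non-trivial, deductively closed, and disjunctive. -/
def Regular (Δ : Set (Fm K)) : Prop :=
  (∃ A, ¬ Deriv Δ A) ∧ (∀ A, Deriv Δ A → A ∈ Δ) ∧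
  (∀ A B, Deriv Δ (.disj A B) → Deriv Δ A ∨ Deriv Δ B)

end QLETF
namespace S12
open QLETF

section MapLemmas

variable {K K' K'' : Type}

lemma substT_map (f : K → K') (x : ℕ) (t a : ℕ ⊕ K) :
    Sum.map id f (substT x t a) = substT x (Sum.map id f t) (Sum.map id f a) := by
  cases a with
  | inl y => by_cases h : y = x <;> simp [substT, h]
  | inr c => simp [substT]

lemma subst_map (f : K → K') (x : ℕ) (t : ℕ ⊕ K) (A : Fm K) :
    (subst x t A).map f = subst x (Sum.map id f t) (A.map f) := by
  induction A with
  | pred n ts => simp [subst, Fm.map, List.map_map, Function.comp, substT_map]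
  | eq a b => simp [subst, Fm.map, substT_map]
  | neg A ih => simp [subst, Fm.map, ih]
  | conj A B ihA ihB => simp [subst, Fm.map, ihA, ihB]
  | disj A B ihA ihB => simp [subst, Fm.map, ihA, ihB]
  | cl A ih => simp [subst, Fm.map, ih]
  | ncl A ih => simp [subst, Fm.map, ih]
  | all y A ih => by_cases h : y = x <;> simp [subst, Fm.map, h, ih]
  | ex y A ih => by_cases h : y = x <;> simp [subst, Fm.map, h, ih]


lemma map_subst_inr (f : K → K') (x : ℕ) (c : K) (A : Fm K) :
    (subst x (Sum.inr c) A).map f = subst x (Sum.inr (f c)) (A.map f) := by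
  rw [subst_map]; rfl

lemma inl_mem_map_iff (f : K → K') (ts : List (ℕ ⊕ K)) (y : ℕ) :
    Sum.inl y ∈ ts.map (Sum.map id f) ↔ Sum.inl y ∈ ts := by
  simp only [List.mem_map]
  constructor
  · rintro ⟨a, ha, he⟩
    cases a <;> simp_all
  · intro h; exact ⟨_, h, rfl⟩

lemma fv_map (f : K → K') (A : Fm K) : fv (A.map f) = fv A := by
  induction A with
  | pred n ts => ext y; simp [fv, Fm.map, inl_mem_map_iff]
  | eq a b => ext y; cases a <;> cases b <;> simp [fv, Fm.map]
  | neg A ih => simpa [fv, Fm.map] using ih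
  | conj A B ihA ihB => simp [fv, Fm.map, ihA, ihB]
  | disj A B ihA ihB => simp [fv, Fm.map, ihA, ihB]
  | cl A ih => simpa [fv, Fm.map] using ih
  | ncl A ih => simpa [fv, Fm.map] using ih
  | all y A ih => simp [fv, Fm.map, ih]
  | ex y A ih => simp [fv, Fm.map, ih]

lemma vars_map (f : K → K') (A : Fm K) : vars (A.map f) = vars A := by
  induction A with
  | pred n ts => ext y; simp [vars, Fm.map, inl_mem_map_iff]
  | eq a b => ext y; cases a <;> cases b <;> simp [vars, Fm.map]
  | neg A ih => simpa [vars, Fm.map] using ih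
  | conj A B ihA ihB => simp [vars, Fm.map, ihA, ihB]
  | disj A B ihA ihB => simp [vars, Fm.map, ihA, ihB]
  | cl A ih => simpa [vars, Fm.map] using ih
  | ncl A ih => simpa [vars, Fm.map] using ih
  | all y A ih => simp [vars, Fm.map, ih]
  | ex y A ih => simp [vars, Fm.map, ih]

lemma closed_map (f : K → K') (A : Fm K) : Closed (A.map f) ↔ Closed A := by
  unfold Closed; rw [fv_map]

lemma alpha_map (f : K → K') {A B : Fm K} (h : Alpha A B) :
    Alpha (A.map f) (B.map f) := by
  induction h with
  | refl A => exact .refl _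
  | symm _ ih => exact .symm ih
  | trans _ _ ih1 ih2 => exact .trans ih1 ih2
  | negC _ ih => exact .negC ih
  | conjC _ _ ih1 ih2 => exact .conjC ih1 ih2
  | disjC _ _ ih1 ih2 => exact .disjC ih1 ih2
  | clC _ ih => exact .clC ih
  | nclC _ ih => exact .nclC ih
  | allC _ ih => exact .allC ih
  | exC _ ih => exact .exC ih
  | allR x y A hy =>
      have h2 : y ∉ vars (A.map f) := by rw [vars_map]; exact hy
      have := Alpha.allR x y (A.map f) h2
      simpa [Fm.map, subst_map] using this
  | exR x y A hy =>
      have h2 : y ∉ vars (A.map f) := by rw [vars_map]; exact hy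
      have := Alpha.exR x y (A.map f) h2
      simpa [Fm.map, subst_map] using this

lemma summap_comp (f : K → K') (g : K' → K'') (a : ℕ ⊕ K) :
    Sum.map id g (Sum.map id f a) = Sum.map id (g ∘ f) a := by cases a <;> rfl

lemma map_map (f : K → K') (g : K' → K'') (A : Fm K) :
    (A.map f).map g = A.map (g ∘ f) := by
  induction A with
  | pred n ts => simp [Fm.map, List.map_map, Function.comp, summap_comp]
  | eq a b => simp [Fm.map, summap_comp]
  | neg A ih => simp [Fm.map, ih]
  | conj A B ihA ihB => simp [Fm.map, ihA, ihB]
  | disj A B ihA ihB => simp [Fm.map, ihA, ihB]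
  | cl A ih => simp [Fm.map, ih]
  | ncl A ih => simp [Fm.map, ih]
  | all y A ih => simp [Fm.map, ih]
  | ex y A ih => simp [Fm.map, ih]

end MapLemmas

end S12
namespace S12
open QLETF

section Ultra

variable {C ι : Type} (U : Ultrafilter ι) (D : ι → Type)

/-- Equality on a `U`-large set of indices. -/
def sd : Setoid (∀ i, D i) where
  r x y := {i | x i = y i} ∈ U
  iseqv := by
    refine ⟨fun x => ?_, fun {x y} h => ?_, fun {x y z} h1 h2 => ?_⟩
    · exact Filter.univ_mem' (fun i => rfl)
    · have : {i | x i = y i} = {i | y i = x i} := by ext i; exact eq_comm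
      rwa [this] at h
    · exact Filter.mem_of_superset (Filter.inter_mem h1 h2)
        (fun i hi => hi.1.trans hi.2)

/-- The ultraproduct domain. -/
abbrev Dq : Type := Quotient (sd U D)

lemma out_mk (x : ∀ i, D i) :
    {i | (Quotient.mk (sd U D) x).out i = x i} ∈ U :=
  Quotient.exact (Quotient.out_eq (Quotient.mk (sd U D) x))

lemma mk_eq_mk {x y : ∀ i, D i} :
    Quotient.mk (sd U D) x = Quotient.mk (sd U D) y ↔ {i | x i = y i} ∈ U :=
  ⟨fun h => Quotient.exact h, fun h => Quotient.sound h⟩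

/-- Boolean limit along the ultrafilter. -/
noncomputable def limU (f : ι → Bool) : Bool :=
  @decide ({i | f i = true} ∈ U) (Classical.propDecidable _)

lemma limU_true {f : ι → Bool} : limU U f = true ↔ {i | f i = true} ∈ U := by
  simp [limU]

lemma mem_false_iff {f : ι → Bool} :
    {i | f i = false} ∈ U ↔ {i | f i = true} ∉ U := by
  rw [show {i | f i = false} = {i | f i = true}ᶜ from by ext i; simp,
    Ultrafilter.compl_mem_iff_notMem]

lemma limU_false {f : ι → Bool} : limU U f = false ↔ {i | f i = false} ∈ U := by
  have h1 : (limU U f = false) ↔ ¬ (limU U f = true) := by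
    cases h : limU U f <;> simp
  rw [h1, limU_true, mem_false_iff]

lemma mem_iff_of_eventually {s t T : Set ι} (hT : T ∈ U)
    (h : ∀ i ∈ T, (i ∈ s ↔ i ∈ t)) : s ∈ U ↔ t ∈ U := by
  constructor
  · intro hh
    exact Filter.mem_of_superset (Filter.inter_mem hh hT)
      (fun i hi => (h i hi.2).mp hi.1)
  · intro hh
    exact Filter.mem_of_superset (Filter.inter_mem hh hT)
      (fun i hi => (h i hi.2).mpr hi.1)

lemma limU_eq_iff {f g : ι → Bool} :
    limU U f = limU U g ↔ {i | f i = g i} ∈ U := by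
  constructor
  · intro h
    cases hf : limU U f with
    | true =>
        rw [hf] at h
        have h1 := (limU_true U).mp hf
        have h2 := (limU_true U).mp h.symm
        exact Filter.mem_of_superset (Filter.inter_mem h1 h2)
          (fun i hi => hi.1.trans hi.2.symm)
    | false =>
        rw [hf] at h
        have h1 := (limU_false U).mp hf
        have h2 := (limU_false U).mp h.symm
        exact Filter.mem_of_superset (Filter.inter_mem h1 h2)
          (fun i hi => hi.1.trans hi.2.symm)
  · intro h
    have h2 : {i | f i = true} ∈ U ↔ {i | g i = true} ∈ U :=
      mem_iff_of_eventually U h (fun i hi => by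
        simp only [Set.mem_setOf_eq] at hi ⊢; rw [hi])
    cases hf : limU U f with
    | true =>
        exact ((limU_true U).mpr (h2.mp ((limU_true U).mp hf))).symm
    | false =>
        exact ((limU_false U).mpr (by
          rw [mem_false_iff, ← h2, ← mem_false_iff]
          exact (limU_false U).mp hf)).symm

lemma mem_list {α : Type} (cs : List α) (p : α → Set ι)
    (h : ∀ c ∈ cs, p c ∈ U) : {i | ∀ c ∈ cs, i ∈ p c} ∈ U := by
  induction cs with
  | nil => exact Filter.univ_mem' (fun i => by simp)
  | cons a t ih =>
      have h2 := Filter.inter_mem (h a (by simp))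
        (ih (fun c hc => h c (by simp [hc])))
      refine Filter.mem_of_superset h2 ?_
      rintro i ⟨h1, h2⟩ c hc
      rcases List.mem_cons.mp hc with rfl | hc
      · exact h1
      · exact h2 c hc

variable (S : ∀ i, Struc C (D i))

/-- Map a constant of the product diagram language to the `i`-th component. -/
noncomputable def fC (i : ι) : C ⊕ Dq U D → C ⊕ D i := Sum.map id (fun d => d.out i)

/-- The ultraproduct structure. -/
noncomputable def Sq : Struc C (Dq U D) where
  cI c := Quotient.mk (sd U D) (fun i => (S i).cI c)
  Pplus n ds := {i | (S i).Pplus n (ds.map (fun d => d.out i))} ∈ U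
  Pminus n ds := {i | (S i).Pminus n (ds.map (fun d => d.out i))} ∈ U
  eqMinus a b := {i | (S i).eqMinus (a.out i) (b.out i)} ∈ U

lemma den_eq (c : C ⊕ Dq U D) :
    den (Sq U D S) c = Quotient.mk (sd U D) (fun i => den (S i) (fC U D i c)) := by
  cases c with
  | inl c => rfl
  | inr d =>
      show d = _
      have : (fun i => den (S i) (fC U D i (Sum.inr d))) = fun i => d.out i := by
        funext i; rfl
      rw [this]
      exact (Quotient.out_eq d).symm

lemma out_den (c : C ⊕ Dq U D) :
    {i | (den (Sq U D S) c).out i = den (S i) (fC U D i c)} ∈ U := by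
  rw [den_eq]; exact out_mk U D _

variable (v : ∀ i, Fm (C ⊕ D i) → Bool)

/-- The ultraproduct valuation. -/
noncomputable def vq (F : Fm (C ⊕ Dq U D)) : Bool :=
  limU U (fun i => v i (F.map (fC U D i)))

lemma vq_true {F : Fm (C ⊕ Dq U D)} :
    vq U D v F = true ↔ {i | v i (F.map (fC U D i)) = true} ∈ U := limU_true U

lemma vq_false {F : Fm (C ⊕ Dq U D)} :
    vq U D v F = false ↔ {i | v i (F.map (fC U D i)) = false} ∈ U := limU_false U

end Ultra

end S12
namespace S12
open QLETF

section Ultra2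

variable {C ι : Type} (U : Ultrafilter ι) (D : ι → Type)
  (S : ∀ i, Struc C (D i)) (v : ∀ i, Fm (C ⊕ D i) → Bool)

lemma bool_tf {b : Bool} (h : b ≠ false) : b = true := by
  cases b
  · exact absurd rfl h
  · rfl

lemma fC_inr (i : ι) (d : Dq U D) : fC (C := C) U D i (Sum.inr d) = Sum.inr (d.out i) := rfl

lemma nonempty_dq (hD : ∀ i, Nonempty (D i)) : Nonempty (Dq U D) :=
  ⟨Quotient.mk _ (fun i => (hD i).some)⟩

theorem isval_q (hD : ∀ i, Nonempty (D i)) (hv : ∀ i, IsVal (S i) (v i)) :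
    IsVal (Sq U D S) (vq U D v) := by
  classical
  refine ⟨⟨?_, ?_, ?_, ?_, ?_, ?_, ?_, ?_, ?_, ?_, ?_, ?_, ?_⟩, ?_, ?_, ?_, ?_⟩
  -- atom
  · intro n cs
    rw [vq_true]
    show _ ∈ U ↔
      ({i | (S i).Pplus n ((cs.map (den (Sq U D S))).map (fun d => d.out i))} ∈ U)
    have hT := mem_list U cs
      (fun c => {i | (den (Sq U D S) c).out i = den (S i) (fC U D i c)})
      (fun c _ => out_den U D S c)
    apply mem_iff_of_eventually U hT
    intro i hi
    simp only [Set.mem_setOf_eq]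
    have hm : ((Fm.pred n (cs.map Sum.inr) : Fm (C ⊕ Dq U D)).map (fC U D i))
        = Fm.pred n ((cs.map (fC U D i)).map Sum.inr) := by
      simp [Fm.map, List.map_map]
    rw [hm, (hv i).atom n (cs.map (fC U D i))]
    have hl : (cs.map (fC U D i)).map (den (S i))
        = (cs.map (den (Sq U D S))).map (fun d => d.out i) := by
      rw [List.map_map, List.map_map]
      exact List.map_congr_left (fun c hc => (hi c hc).symm)
    rw [hl]
  -- natom
  · intro n cs
    rw [vq_true]
    show _ ∈ U ↔
      ({i | (S i).Pminus n ((cs.map (den (Sq U D S))).map (fun d => d.out i))} ∈ U)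
    have hT := mem_list U cs
      (fun c => {i | (den (Sq U D S) c).out i = den (S i) (fC U D i c)})
      (fun c _ => out_den U D S c)
    apply mem_iff_of_eventually U hT
    intro i hi
    simp only [Set.mem_setOf_eq]
    have hm : ((Fm.neg (Fm.pred n (cs.map Sum.inr)) : Fm (C ⊕ Dq U D)).map (fC U D i))
        = Fm.neg (Fm.pred n ((cs.map (fC U D i)).map Sum.inr)) := by
      simp [Fm.map, List.map_map]
    rw [hm, (hv i).natom n (cs.map (fC U D i))]
    have hl : (cs.map (fC U D i)).map (den (S i))
        = (cs.map (den (Sq U D S))).map (fun d => d.out i) := by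
      rw [List.map_map, List.map_map]
      exact List.map_congr_left (fun c hc => (hi c hc).symm)
    rw [hl]
  -- eqP
  · intro a b
    rw [vq_true, den_eq, den_eq, mk_eq_mk]
    apply mem_iff_of_eventually U Filter.univ_mem
    intro i _
    simp only [Set.mem_setOf_eq]
    exact (hv i).eqP (fC U D i a) (fC U D i b)
  -- eqN
  · intro a b
    rw [vq_true]
    show _ ∈ U ↔
      ({i | (S i).eqMinus ((den (Sq U D S) a).out i) ((den (Sq U D S) b).out i)} ∈ U)
    have hT := Filter.inter_mem (out_den U D S a) (out_den U D S b)
    apply mem_iff_of_eventually U hT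
    rintro i ⟨h1, h2⟩
    simp only [Set.mem_setOf_eq] at h1 h2 ⊢
    have := (hv i).eqN (fC U D i a) (fC U D i b)
    rw [← h1, ← h2] at this
    exact this
  -- andC
  · intro A B hA hB
    rw [vq_true, vq_true, vq_true]
    have hs : {i | v i ((Fm.conj A B).map (fC U D i)) = true}
        = {i | v i (A.map (fC U D i)) = true} ∩ {i | v i (B.map (fC U D i)) = true} := by
      ext i
      exact (hv i).andC _ _ ((closed_map _ _).mpr hA) ((closed_map _ _).mpr hB)
    rw [hs]
    exact Filter.inter_mem_iff
  -- orC
  · intro A B hA hB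
    rw [vq_true, vq_true, vq_true]
    have hs : {i | v i ((Fm.disj A B).map (fC U D i)) = true}
        = {i | v i (A.map (fC U D i)) = true} ∪ {i | v i (B.map (fC U D i)) = true} := by
      ext i
      exact (hv i).orC _ _ ((closed_map _ _).mpr hA) ((closed_map _ _).mpr hB)
    rw [hs, Ultrafilter.union_mem_iff]
  -- nandC
  · intro A B hA hB
    rw [vq_true, vq_true, vq_true]
    have hs : {i | v i ((Fm.neg (Fm.conj A B)).map (fC U D i)) = true}
        = {i | v i ((Fm.neg A).map (fC U D i)) = true}
          ∪ {i | v i ((Fm.neg B).map (fC U D i)) = true} := by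
      ext i
      exact (hv i).nandC _ _ ((closed_map _ _).mpr hA) ((closed_map _ _).mpr hB)
    rw [hs, Ultrafilter.union_mem_iff]
  -- norC
  · intro A B hA hB
    rw [vq_true, vq_true, vq_true]
    have hs : {i | v i ((Fm.neg (Fm.disj A B)).map (fC U D i)) = true}
        = {i | v i ((Fm.neg A).map (fC U D i)) = true}
          ∩ {i | v i ((Fm.neg B).map (fC U D i)) = true} := by
      ext i
      exact (hv i).norC _ _ ((closed_map _ _).mpr hA) ((closed_map _ _).mpr hB)
    rw [hs]
    exact Filter.inter_mem_iff
  -- dnC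
  · intro A hA
    exact (limU_eq_iff U).mpr (Filter.univ_mem'
      (fun i => (hv i).dnC (A.map (fC U D i)) ((closed_map _ _).mpr hA)))
  -- allC
  · intro x A hfv
    have hfv' : ∀ i, fv (A.map (fC U D i)) ⊆ {x} := fun i => by
      rw [fv_map]; exact hfv
    rw [vq_true]
    constructor
    · intro hT d
      rw [vq_true]
      refine Filter.mem_of_superset hT ?_
      intro i hi
      simp only [Set.mem_setOf_eq] at hi ⊢
      rw [map_subst_inr, fC_inr]
      exact ((hv i).allC x _ (hfv' i)).mp hi (d.out i)
    · intro h
      by_contra hT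
      have hT' : {i | v i (Fm.all x (A.map (fC U D i))) = false} ∈ U :=
        (mem_false_iff U).mpr hT
      let P : ∀ i, D i → Prop := fun i e =>
        v i (subst x (Sum.inr (Sum.inr e)) (A.map (fC U D i))) = false
      let dfun : ∀ i, D i := fun i =>
        if hc : ∃ e : D i, P i e then hc.choose else (hD i).some
      have hmem := h (Quotient.mk (sd U D) dfun)
      rw [vq_true] at hmem
      have hbig := Filter.inter_mem (Filter.inter_mem hmem (out_mk U D dfun)) hT'
      obtain ⟨i, ⟨h1, h2⟩, h3⟩ := Filter.nonempty_of_mem hbig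
      simp only [Set.mem_setOf_eq] at h1 h2 h3
      have hcex : ∃ e : D i, P i e := by
        by_contra hc
        push_neg at hc
        have hall : ∀ e : D i,
            v i (subst x (Sum.inr (Sum.inr e)) (A.map (fC U D i))) = true :=
          fun e => bool_tf (hc e)
        have := ((hv i).allC x _ (hfv' i)).mpr hall
        rw [h3] at this
        exact Bool.noConfusion this
      have hval : v i (subst x (Sum.inr (Sum.inr (dfun i))) (A.map (fC U D i))) = false := by
        show v i (subst x (Sum.inr (Sum.inr
          (if hc : ∃ e : D i, P i e then hc.choose else (hD i).some))) (A.map (fC U D i))) = false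
        rw [dif_pos hcex]
        exact hcex.choose_spec
      rw [map_subst_inr, fC_inr, h2] at h1
      rw [h1] at hval
      exact Bool.noConfusion hval
  -- exC
  · intro x A hfv
    have hfv' : ∀ i, fv (A.map (fC U D i)) ⊆ {x} := fun i => by
      rw [fv_map]; exact hfv
    rw [vq_true]
    constructor
    · intro hT
      let P : ∀ i, D i → Prop := fun i e =>
        v i (subst x (Sum.inr (Sum.inr e)) (A.map (fC U D i))) = true
      let dfun : ∀ i, D i := fun i =>
        if hc : ∃ e : D i, P i e then hc.choose else (hD i).some
      refine ⟨Quotient.mk (sd U D) dfun, ?_⟩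
      rw [vq_true]
      refine Filter.mem_of_superset (Filter.inter_mem hT (out_mk U D dfun)) ?_
      rintro i ⟨h1, h2⟩
      simp only [Set.mem_setOf_eq] at h1 h2 ⊢
      have hcex : ∃ e : D i, P i e := ((hv i).exC x _ (hfv' i)).mp h1
      rw [map_subst_inr, fC_inr, h2]
      show v i (subst x (Sum.inr (Sum.inr
        (if hc : ∃ e : D i, P i e then hc.choose else (hD i).some))) (A.map (fC U D i))) = true
      rw [dif_pos hcex]
      exact hcex.choose_spec
    · rintro ⟨d, hd⟩
      rw [vq_true] at hd
      refine Filter.mem_of_superset hd ?_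
      intro i hi
      simp only [Set.mem_setOf_eq] at hi ⊢
      rw [map_subst_inr, fC_inr] at hi
      exact ((hv i).exC x _ (hfv' i)).mpr ⟨d.out i, hi⟩
  -- nallC
  · intro x A hfv
    have hfv' : ∀ i, fv (A.map (fC U D i)) ⊆ {x} := fun i => by
      rw [fv_map]; exact hfv
    rw [vq_true]
    constructor
    · intro hT
      let P : ∀ i, D i → Prop := fun i e =>
        v i (Fm.neg (subst x (Sum.inr (Sum.inr e)) (A.map (fC U D i)))) = true
      let dfun : ∀ i, D i := fun i =>
        if hc : ∃ e : D i, P i e then hc.choose else (hD i).some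
      refine ⟨Quotient.mk (sd U D) dfun, ?_⟩
      rw [vq_true]
      refine Filter.mem_of_superset (Filter.inter_mem hT (out_mk U D dfun)) ?_
      rintro i ⟨h1, h2⟩
      simp only [Set.mem_setOf_eq] at h1 h2 ⊢
      have hcex : ∃ e : D i, P i e := ((hv i).nallC x _ (hfv' i)).mp h1
      show v i (Fm.neg ((subst x (Sum.inr (Sum.inr (Quotient.mk (sd U D) dfun))) A).map
        (fC U D i))) = true
      rw [map_subst_inr, fC_inr, h2]
      show v i (Fm.neg (subst x (Sum.inr (Sum.inr
        (if hc : ∃ e : D i, P i e then hc.choose else (hD i).some))) (A.map (fC U D i)))) = true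
      rw [dif_pos hcex]
      exact hcex.choose_spec
    · rintro ⟨d, hd⟩
      rw [vq_true] at hd
      refine Filter.mem_of_superset hd ?_
      intro i hi
      simp only [Set.mem_setOf_eq] at hi ⊢
      have hi' : v i (Fm.neg ((subst x (Sum.inr (Sum.inr d)) A).map (fC U D i))) = true := hi
      rw [map_subst_inr, fC_inr] at hi'
      exact ((hv i).nallC x _ (hfv' i)).mpr ⟨d.out i, hi'⟩
  -- nexC
  · intro x A hfv
    have hfv' : ∀ i, fv (A.map (fC U D i)) ⊆ {x} := fun i => by
      rw [fv_map]; exact hfv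
    rw [vq_true]
    constructor
    · intro hT d
      rw [vq_true]
      refine Filter.mem_of_superset hT ?_
      intro i hi
      simp only [Set.mem_setOf_eq] at hi ⊢
      show v i (Fm.neg ((subst x (Sum.inr (Sum.inr d)) A).map (fC U D i))) = true
      rw [map_subst_inr, fC_inr]
      exact ((hv i).nexC x _ (hfv' i)).mp hi (d.out i)
    · intro h
      by_contra hT
      have hT' : {i | v i (Fm.neg (Fm.ex x (A.map (fC U D i)))) = false} ∈ U :=
        (mem_false_iff U).mpr hT
      let P : ∀ i, D i → Prop := fun i e =>
        v i (Fm.neg (subst x (Sum.inr (Sum.inr e)) (A.map (fC U D i)))) = false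
      let dfun : ∀ i, D i := fun i =>
        if hc : ∃ e : D i, P i e then hc.choose else (hD i).some
      have hmem := h (Quotient.mk (sd U D) dfun)
      rw [vq_true] at hmem
      have hbig := Filter.inter_mem (Filter.inter_mem hmem (out_mk U D dfun)) hT'
      obtain ⟨i, ⟨h1, h2⟩, h3⟩ := Filter.nonempty_of_mem hbig
      simp only [Set.mem_setOf_eq] at h1 h2 h3
      have hcex : ∃ e : D i, P i e := by
        by_contra hc
        push_neg at hc
        have hall : ∀ e : D i,
            v i (Fm.neg (subst x (Sum.inr (Sum.inr e)) (A.map (fC U D i)))) = true :=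
          fun e => bool_tf (hc e)
        have := ((hv i).nexC x _ (hfv' i)).mpr hall
        rw [h3] at this
        exact Bool.noConfusion this
      have hval : v i (Fm.neg (subst x (Sum.inr (Sum.inr (dfun i)))
          (A.map (fC U D i)))) = false := by
        show v i (Fm.neg (subst x (Sum.inr (Sum.inr
          (if hc : ∃ e : D i, P i e then hc.choose else (hD i).some)))
          (A.map (fC U D i)))) = false
        rw [dif_pos hcex]
        exact hcex.choose_spec
      have h1' : v i (Fm.neg ((subst x (Sum.inr (Sum.inr (Quotient.mk (sd U D) dfun))) A).map
        (fC U D i))) = true := h1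
      rw [map_subst_inr, fC_inr, h2] at h1'
      rw [h1'] at hval
      exact Bool.noConfusion hval
  -- clC
  · intro A hA hcl
    rw [vq_true] at hcl
    constructor
    · intro hT
      rw [vq_true] at hT
      rw [vq_false]
      refine Filter.mem_of_superset (Filter.inter_mem hcl hT) ?_
      rintro i ⟨h1, h2⟩
      exact ((hv i).clC _ ((closed_map _ _).mpr hA) h1).mp h2
    · intro hF
      rw [vq_false] at hF
      rw [vq_true]
      refine Filter.mem_of_superset (Filter.inter_mem hcl hF) ?_
      rintro i ⟨h1, h2⟩
      exact ((hv i).clC _ ((closed_map _ _).mpr hA) h1).mpr h2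
  -- compC
  · intro A hA
    rw [vq_true, vq_false]
    apply mem_iff_of_eventually U Filter.univ_mem
    intro i _
    simp only [Set.mem_setOf_eq]
    exact (hv i).compC _ ((closed_map _ _).mpr hA)
  -- avC
  · intro A A' hA hal
    exact (limU_eq_iff U).mpr (Filter.univ_mem'
      (fun i => (hv i).avC _ _ ((closed_map _ _).mpr hA) (alpha_map _ hal)))
  -- substC
  · intro x A hfv c₁ c₂ hden hval
    have hfv' : ∀ i, fv (A.map (fC U D i)) ⊆ {x} := fun i => by
      rw [fv_map]; exact hfv
    have hden' : {i | den (S i) (fC U D i c₁) = den (S i) (fC U D i c₂)} ∈ U := by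
      rw [den_eq, den_eq, mk_eq_mk] at hden; exact hden
    have hval' := (limU_eq_iff U).mp hval
    have hbig := Filter.inter_mem hden' hval'
    have comp : ∀ i, den (S i) (fC U D i c₁) = den (S i) (fC U D i c₂) →
        v i ((subst x (Sum.inr c₁) A).map (fC U D i))
          = v i ((subst x (Sum.inr c₂) A).map (fC U D i)) →
        (v i (Fm.neg (subst x (Sum.inr (fC U D i c₁)) (A.map (fC U D i))))
            = v i (Fm.neg (subst x (Sum.inr (fC U D i c₂)) (A.map (fC U D i)))) ∧
         v i (Fm.cl (subst x (Sum.inr (fC U D i c₁)) (A.map (fC U D i))))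
            = v i (Fm.cl (subst x (Sum.inr (fC U D i c₂)) (A.map (fC U D i)))) ∧
         v i (Fm.ncl (subst x (Sum.inr (fC U D i c₁)) (A.map (fC U D i))))
            = v i (Fm.ncl (subst x (Sum.inr (fC U D i c₂)) (A.map (fC U D i))))) := by
      intro i h1 h2
      rw [map_subst_inr, map_subst_inr] at h2
      exact (hv i).substC x _ (hfv' i) (fC U D i c₁) (fC U D i c₂) h1 h2
    refine ⟨?_, ?_, ?_⟩
    · refine (limU_eq_iff U).mpr (Filter.mem_of_superset hbig ?_)
      rintro i ⟨h1, h2⟩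
      show v i ((Fm.neg (subst x (Sum.inr c₁) A)).map (fC U D i))
        = v i ((Fm.neg (subst x (Sum.inr c₂) A)).map (fC U D i))
      show v i (Fm.neg ((subst x (Sum.inr c₁) A).map (fC U D i)))
        = v i (Fm.neg ((subst x (Sum.inr c₂) A).map (fC U D i)))
      rw [map_subst_inr, map_subst_inr]
      exact (comp i h1 h2).1
    · refine (limU_eq_iff U).mpr (Filter.mem_of_superset hbig ?_)
      rintro i ⟨h1, h2⟩
      show v i (Fm.cl ((subst x (Sum.inr c₁) A).map (fC U D i)))
        = v i (Fm.cl ((subst x (Sum.inr c₂) A).map (fC U D i)))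
      rw [map_subst_inr, map_subst_inr]
      exact (comp i h1 h2).2.1
    · refine (limU_eq_iff U).mpr (Filter.mem_of_superset hbig ?_)
      rintro i ⟨h1, h2⟩
      show v i (Fm.ncl ((subst x (Sum.inr c₁) A).map (fC U D i)))
        = v i (Fm.ncl ((subst x (Sum.inr c₂) A).map (fC U D i)))
      rw [map_subst_inr, map_subst_inr]
      exact (comp i h1 h2).2.2

lemma sat_q (B : Fm C) :
    Sat (Sq U D S) (vq U D v) B ↔ {i | Sat (S i) (v i) B} ∈ U := by
  show vq U D v (B.map Sum.inl) = true ↔ _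
  rw [vq_true]
  have hm : ∀ i : ι, (B.map (Sum.inl : C → C ⊕ Dq U D)).map (fC U D i) = B.map Sum.inl := by
    intro i
    rw [map_map]
    rfl
  simp only [hm]
  exact Iff.rfl

end Ultra2

end S12
namespace S12
open QLETF

section Combine

variable {C : Type}

/-- Existence of an ultrafilter on the finite subsets of `Γ` concentrating on
supersets of each singleton. -/
lemma exists_ultra (Γ : Set (Fm C)) :
    ∃ U : Ultrafilter {p : Set (Fm C) // p ⊆ Γ ∧ p.Finite},
      ∀ B ∈ Γ, {i : {p : Set (Fm C) // p ⊆ Γ ∧ p.Finite} | B ∈ i.1} ∈ U := by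
  set ι := {p : Set (Fm C) // p ⊆ Γ ∧ p.Finite}
  set G : Set (Set ι) := (fun B => {i : ι | B ∈ i.1}) '' Γ with hG
  have hinj : Set.InjOn (fun B => {i : ι | B ∈ i.1}) Γ := by
    intro B hB B' hB' he
    by_contra hne
    have he' : {i : ι | B ∈ i.1} = {i : ι | B' ∈ i.1} := he
    have hi : (⟨{B}, by simpa using hB, Set.finite_singleton B⟩ : ι) ∈ {i : ι | B ∈ i.1} := by
      exact Set.mem_singleton B
    rw [he'] at hi
    change B' = B at hi
    exact hne hi.symm
  have hne : (Filter.generate G).NeBot := by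
    rw [Filter.generate_neBot_iff]
    intro t ht htf
    set Γ' : Set (Fm C) := Γ ∩ (fun B => {i : ι | B ∈ i.1}) ⁻¹' t with hΓ'
    have hfin : Γ'.Finite := by
      refine Set.Finite.of_finite_image (f := fun B => {i : ι | B ∈ i.1}) ?_ ?_
      · refine Set.Finite.subset htf ?_
        rintro s ⟨B, hB, rfl⟩
        exact hB.2
      · exact hinj.mono Set.inter_subset_left
    refine ⟨⟨Γ', Set.inter_subset_left, hfin⟩, ?_⟩
    intro s hs
    obtain ⟨B, hBΓ, rfl⟩ := ht hs
    show B ∈ Γ'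
    exact ⟨hBΓ, hs⟩
  obtain ⟨U, hU⟩ := Ultrafilter.exists_le (Filter.generate G)
  refine ⟨U, fun B hB => ?_⟩
  exact hU (Filter.mem_generate_of_mem ⟨B, hB, rfl⟩)

/-- Combining models of all finite subsets into a model of `Γ`, keeping track
of the failure of `A`. -/
lemma combine (Γ : Set (Fm C)) (Q : ∀ (D : Type) (S : Struc C D)
      (v : Fm (C ⊕ D) → Bool), Prop)
    (hQ : ∀ (ι : Type) (U : Ultrafilter ι) (D : ι → Type) (S : ∀ i, Struc C (D i))
      (v : ∀ i, Fm (C ⊕ D i) → Bool),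
      (∀ i, Q (D i) (S i) (v i)) → Q (Dq U D) (Sq U D S) (vq U D v))
    (h : ∀ Γ₀ ⊆ Γ, Γ₀.Finite → ∃ (D : Type) (S : Struc C D) (v : Fm (C ⊕ D) → Bool),
      Nonempty D ∧ IsVal S v ∧ (∀ B ∈ Γ₀, Sat S v B) ∧ Q D S v) :
    ∃ (D : Type) (S : Struc C D) (v : Fm (C ⊕ D) → Bool),
      Nonempty D ∧ IsVal S v ∧ (∀ B ∈ Γ, Sat S v B) ∧ Q D S v := by
  obtain ⟨U, hU⟩ := exists_ultra Γ
  choose D S v hne hval hsat hq using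
    (fun i : {p : Set (Fm C) // p ⊆ Γ ∧ p.Finite} => h i.1 i.2.1 i.2.2)
  refine ⟨Dq U D, Sq U D S, vq U D v, nonempty_dq U D hne, isval_q U D S v hne hval, ?_, ?_⟩
  · intro B hB
    rw [sat_q]
    refine Filter.mem_of_superset (hU B hB) ?_
    intro i hi
    exact hsat i B hi
  · exact hQ _ U D S v hq

end Combine

end S12
namespace S12
open QLETF

/-- Compactness for QLET_F. -/
theorem compactness {C : Type} [Infinite C] (Γ : Set (Fm C)) (A : Fm C)
    (hΓ : ∀ B ∈ Γ, Closed B) (hA : Closed A) :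
    (SemCons Γ A ↔ ∃ Γ₀ ⊆ Γ, Γ₀.Finite ∧ SemCons Γ₀ A) ∧
    (HasModel Γ ↔ ∀ Γ₀ ⊆ Γ, Γ₀.Finite → HasModel Γ₀) := by
  constructor
  · constructor
    · intro h
      by_contra hc
      push_neg at hc
      have hmods : ∀ Γ₀ ⊆ Γ, Γ₀.Finite →
          ∃ (D : Type) (S : Struc C D) (v : Fm (C ⊕ D) → Bool),
            Nonempty D ∧ IsVal S v ∧ (∀ B ∈ Γ₀, Sat S v B) ∧ ¬ Sat S v A := by
        intro Γ₀ hsub hfin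
        have hns : ¬ SemCons Γ₀ A := hc Γ₀ hsub hfin
        unfold SemCons at hns
        push_neg at hns
        obtain ⟨D, S, v, hne, hval, hsat, hnA⟩ := hns
        exact ⟨D, S, v, hne, hval, hsat, hnA⟩
      have hQ : ∀ (ι : Type) (U : Ultrafilter ι) (D : ι → Type)
          (S : ∀ i, Struc C (D i)) (v : ∀ i, Fm (C ⊕ D i) → Bool),
          (∀ i, ¬ Sat (S i) (v i) A) → ¬ Sat (Sq U D S) (vq U D v) A := by
        intro ι U D S v hq hs
        rw [sat_q] at hs
        obtain ⟨i, hi⟩ := Filter.nonempty_of_mem hs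
        exact hq i hi
      obtain ⟨D, S, v, hne, hval, hsat, hnA⟩ :=
        combine Γ (fun D S v => ¬ Sat S v A) hQ hmods
      exact hnA (h D S v hne hval hsat)
    · rintro ⟨Γ₀, hsub, hfin, hsc⟩ D S v hne hval hsat
      exact hsc D S v hne hval (fun B hB => hsat B (hsub hB))
  · constructor
    · rintro ⟨D, S, v, hne, hval, hsat⟩ Γ₀ hsub hfin
      exact ⟨D, S, v, hne, hval, fun B hB => hsat B (hsub hB)⟩
    · intro h
      have hmods : ∀ Γ₀ ⊆ Γ, Γ₀.Finite →
          ∃ (D : Type) (S : Struc C D) (v : Fm (C ⊕ D) → Bool),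
            Nonempty D ∧ IsVal S v ∧ (∀ B ∈ Γ₀, Sat S v B) ∧ True := by
        intro Γ₀ hs hf
        obtain ⟨D, S, v, h1, h2, h3⟩ := h Γ₀ hs hf
        exact ⟨D, S, v, h1, h2, h3, trivial⟩
      obtain ⟨D, S, v, h1, h2, h3, -⟩ :=
        combine Γ (fun _ _ _ => True) (fun _ _ _ _ _ _ => trivial) hmods
      exact ⟨D, S, v, h1, h2, h3⟩

end S12
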